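/- Let K = 2, assume P(V = j) > 0 and P(V* = k) > 0 for all j, k ∈ {0,1}, assume misclassification is nondifferential, and suppose Y is integrable ℕ-valued with conditional means E[Y · 1_{V = j}]/P(V = j) = exp(α₀ + α₁ j) for j ∈ {0,1} (Poisson log-linear model). Then E[Y · 1_{V* = k}]/P(V* = k) = q_{k0}·exp(α₀) + q_{k1}·exp(α₀ + α₁) for k ∈ {0,1}. Moreover, if α₁ > 0 and q₁₁ > q₀₁, then the naive log-scale contrast Δ = log(E[Y·1_{V*=1}]/P(V*=1)) − log(E[Y·1_{V*=0}]/P(V*=0)) satisfies 0 < Δ ≤ α₁, with Δ < α₁ unless q₀₀ = q₁₁ = 1 (i.e., unless there is no misclassification). -/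

import Mathlib

open MeasureTheory

lemma key_transfer {Ω : Type*} [MeasurableSpace Ω] (μ : Measure Ω) [IsFiniteMeasure μ]
    (Y' : Ω → ℝ) (hY' : Measurable Y') (S T : Set Ω)
    (h : ∀ A : Set ℝ, MeasurableSet A →
      (μ (Y' ⁻¹' A ∩ S)).toReal * (μ T).toReal = (μ (Y' ⁻¹' A ∩ T)).toReal * (μ S).toReal) :
    (μ T).toReal * ∫ ω in S, Y' ω ∂μ = (μ S).toReal * ∫ ω in T, Y' ω ∂μ := by
  have hmeas : (μ T) • Measure.map Y' (μ.restrict S) = (μ S) • Measure.map Y' (μ.restrict T) := by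
    ext A hA
    rw [Measure.smul_apply, Measure.smul_apply, Measure.map_apply hY' hA,
      Measure.map_apply hY' hA, Measure.restrict_apply (hY' hA), Measure.restrict_apply (hY' hA)]
    have := h A hA
    rw [← ENNReal.toReal_mul, ← ENNReal.toReal_mul] at this
    rw [smul_eq_mul, smul_eq_mul, mul_comm (μ T), mul_comm (μ S)]
    exact (ENNReal.toReal_eq_toReal_iff' (by finiteness) (by finiteness)).mp this
  have hint : ∀ U : Set Ω,
      ∫ x, x ∂(Measure.map Y' (μ.restrict U)) = ∫ ω in U, Y' ω ∂μ := fun U =>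
    integral_map hY'.aemeasurable aestronglyMeasurable_id
  have := congrArg (fun ν => ∫ x, x ∂ν) hmeas
  simpa [integral_smul_measure, hint, smul_eq_mul] using this

lemma arith_attenuation (a b q01 q11 : ℝ) (ha : 0 < a) (hab : a < b)
    (hq01 : 0 ≤ q01) (hq11 : q11 ≤ 1) (hlt : q01 < q11) :
    (0 < Real.log ((1 - q11) * a + q11 * b) - Real.log ((1 - q01) * a + q01 * b)) ∧
    (Real.log ((1 - q11) * a + q11 * b) - Real.log ((1 - q01) * a + q01 * b)
      ≤ Real.log b - Real.log a) ∧
    (¬ (q01 = 0 ∧ q11 = 1) →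
      Real.log ((1 - q11) * a + q11 * b) - Real.log ((1 - q01) * a + q01 * b)
        < Real.log b - Real.log a) := by
  set m0 := (1 - q01) * a + q01 * b with hm0
  set m1 := (1 - q11) * a + q11 * b with hm1
  have hm0pos : 0 < m0 := by nlinarith
  have hm1pos : 0 < m1 := by nlinarith
  have hmlt : m0 < m1 := by nlinarith
  have hexp : b * m0 - a * m1 = (b - a) * ((1 - q11) * a + q01 * b) := by
    rw [hm0, hm1]; ring
  refine ⟨by linarith [Real.log_lt_log hm0pos hmlt], ?_, ?_⟩
  · have hfac : 0 ≤ (1 - q11) * a + q01 * b := by nlinarith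
    have hkey : a * m1 ≤ b * m0 := by
      nlinarith [mul_nonneg (sub_nonneg.mpr hab.le) hfac]
    have h1 : m1 / m0 ≤ b / a := by
      rw [div_le_div_iff₀ hm0pos ha]; nlinarith
    have := Real.log_le_log (by positivity) h1
    rwa [Real.log_div (ne_of_gt hm1pos) (ne_of_gt hm0pos),
      Real.log_div (ne_of_gt (lt_trans ha hab)) (ne_of_gt ha)] at this
  · intro hne
    have hcase : 0 < q01 ∨ q11 < 1 := by
      by_contra hc
      push_neg at hc
      exact hne ⟨le_antisymm hc.1 hq01, le_antisymm hq11 (by linarith [hc.2])⟩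
    have hfac : 0 < (1 - q11) * a + q01 * b := by
      rcases hcase with h | h
      · nlinarith
      · nlinarith
    have hkey : a * m1 < b * m0 := by
      nlinarith [mul_pos (sub_pos.mpr hab) hfac]
    have h1 : m1 / m0 < b / a := by
      rw [div_lt_div_iff₀ hm0pos ha]; nlinarith
    have := Real.log_lt_log (by positivity) h1
    rwa [Real.log_div (ne_of_gt hm1pos) (ne_of_gt hm0pos),
      Real.log_div (ne_of_gt (lt_trans ha hab)) (ne_of_gt ha)] at this

/-- Poisson log-linear model with a misclassified binary covariate: under nondifferential
misclassification, the naive conditional means are the reclassification mixtures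
`q_{k0} e^{α₀} + q_{k1} e^{α₀+α₁}`; moreover, when `α₁ > 0` and `q₁₁ > q₀₁`, the naive
log-scale contrast `Δ` satisfies `0 < Δ ≤ α₁`, with `Δ < α₁` unless `q₀₀ = q₁₁ = 1`. -/
theorem poisson_naive_contrast_attenuation
    {Ω : Type*} [MeasurableSpace Ω]
    (μ : Measure Ω) [IsProbabilityMeasure μ]
    (V Vstar : Ω → Fin 2) (Y : Ω → ℕ) (α₀ α₁ : ℝ)
    (hV : Measurable V) (hVstar : Measurable Vstar) (hY : Measurable Y)
    (hYint : Integrable (fun ω => (Y ω : ℝ)) μ)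
    (hposV : ∀ j : Fin 2, 0 < (μ {ω | V ω = j}).toReal)
    (hposVstar : ∀ k : Fin 2, 0 < (μ {ω | Vstar ω = k}).toReal)
    (hnondiff : ∀ A : Set ℝ, MeasurableSet A → ∀ j k : Fin 2,
      (μ ((fun ω => (Y ω : ℝ)) ⁻¹' A ∩ {ω | Vstar ω = k} ∩ {ω | V ω = j})).toReal *
          (μ {ω | V ω = j}).toReal =
        (μ ((fun ω => (Y ω : ℝ)) ⁻¹' A ∩ {ω | V ω = j})).toReal *
          (μ ({ω | Vstar ω = k} ∩ {ω | V ω = j})).toReal)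
    (hmeans : ∀ j : Fin 2,
      (∫ ω in {ω | V ω = j}, (Y ω : ℝ) ∂μ) / (μ {ω | V ω = j}).toReal
        = Real.exp (α₀ + α₁ * ((j : ℕ) : ℝ))) :
    -- reclassification probabilities q k j = P(V = j | V* = k)
    let q : Fin 2 → Fin 2 → ℝ := fun k j =>
      (μ ({ω | V ω = j} ∩ {ω | Vstar ω = k})).toReal / (μ {ω | Vstar ω = k}).toReal
    -- naive log-scale contrast
    let Δ : ℝ :=
      Real.log ((∫ ω in {ω | Vstar ω = 1}, (Y ω : ℝ) ∂μ) / (μ {ω | Vstar ω = 1}).toReal) -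
        Real.log ((∫ ω in {ω | Vstar ω = 0}, (Y ω : ℝ) ∂μ) / (μ {ω | Vstar ω = 0}).toReal)
    (∀ k : Fin 2,
      (∫ ω in {ω | Vstar ω = k}, (Y ω : ℝ) ∂μ) / (μ {ω | Vstar ω = k}).toReal
        = q k 0 * Real.exp α₀ + q k 1 * Real.exp (α₀ + α₁)) ∧
      (0 < α₁ → q 0 1 < q 1 1 →
        (0 < Δ ∧ Δ ≤ α₁) ∧ (¬ (q 0 0 = 1 ∧ q 1 1 = 1) → Δ < α₁)) := by
  intro q Δ
  have hY' : Measurable (fun ω => (Y ω : ℝ)) := by fun_prop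
  have hfin : ∀ x : Fin 2, x = 0 ∨ x = 1 := by decide
  have hSv : ∀ j : Fin 2, MeasurableSet {ω | V ω = j} :=
    fun j => hV (measurableSet_singleton j)
  have hSs : ∀ k : Fin 2, MeasurableSet {ω | Vstar ω = k} :=
    fun k => hVstar (measurableSet_singleton k)
  have hpVne : ∀ j : Fin 2, (μ {ω | V ω = j}).toReal ≠ 0 := fun j => (hposV j).ne'
  have hpSne : ∀ k : Fin 2, (μ {ω | Vstar ω = k}).toReal ≠ 0 := fun k => (hposVstar k).ne'
  -- conditional means rearranged
  have hmean_int : ∀ j : Fin 2, ∫ ω in {ω | V ω = j}, (Y ω : ℝ) ∂μ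
      = Real.exp (α₀ + α₁ * ((j : ℕ) : ℝ)) * (μ {ω | V ω = j}).toReal :=
    fun j => (div_eq_iff (hpVne j)).mp (hmeans j)
  -- key transfer from nondifferential misclassification
  have hkey : ∀ j k : Fin 2,
      ∫ ω in ({ω | Vstar ω = k} ∩ {ω | V ω = j}), (Y ω : ℝ) ∂μ
        = Real.exp (α₀ + α₁ * ((j : ℕ) : ℝ)) *
            (μ ({ω | Vstar ω = k} ∩ {ω | V ω = j})).toReal := by
    intro j k
    have h := key_transfer μ (fun ω => (Y ω : ℝ)) hY'
      ({ω | Vstar ω = k} ∩ {ω | V ω = j}) {ω | V ω = j} (by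
        intro A hA
        have := hnondiff A hA j k
        rwa [Set.inter_assoc] at this)
    rw [hmean_int j] at h
    have h2 : (μ {ω | V ω = j}).toReal *
        (∫ ω in ({ω | Vstar ω = k} ∩ {ω | V ω = j}), (Y ω : ℝ) ∂μ)
        = (μ {ω | V ω = j}).toReal *
          (Real.exp (α₀ + α₁ * ((j : ℕ) : ℝ)) *
            (μ ({ω | Vstar ω = k} ∩ {ω | V ω = j})).toReal) := by
      rw [h]; ring
    exact mul_left_cancel₀ (hpVne j) h2
  -- splitting {V* = k} along V
  have hunion : ∀ k : Fin 2, {ω | Vstar ω = k}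
      = ({ω | Vstar ω = k} ∩ {ω | V ω = 0}) ∪ ({ω | Vstar ω = k} ∩ {ω | V ω = 1}) := by
    intro k
    ext ω
    simp only [Set.mem_union, Set.mem_inter_iff, Set.mem_setOf_eq]
    have := hfin (V ω)
    tauto
  have hdisj : Disjoint ({ω | Vstar ω = (0:Fin 2)} ∪ {ω | Vstar ω = 1} ∩ Set.univ) ∅ := by
    simp
  have hsplit : ∀ k : Fin 2, ∫ ω in {ω | Vstar ω = k}, (Y ω : ℝ) ∂μ
      = (∫ ω in ({ω | Vstar ω = k} ∩ {ω | V ω = 0}), (Y ω : ℝ) ∂μ)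
        + ∫ ω in ({ω | Vstar ω = k} ∩ {ω | V ω = 1}), (Y ω : ℝ) ∂μ := by
    intro k
    conv_lhs => rw [hunion k]
    refine setIntegral_union ?_ ((hSs k).inter (hSv 1)) hYint.integrableOn hYint.integrableOn
    rw [Set.disjoint_left]
    rintro ω ⟨-, h0⟩ ⟨-, h1⟩
    simp only [Set.mem_setOf_eq] at h0 h1
    rw [h0] at h1
    exact absurd h1 (by decide)
  -- measure row sums
  have hmsum : ∀ k : Fin 2,
      (μ ({ω | Vstar ω = k} ∩ {ω | V ω = 0})).toReal
        + (μ ({ω | Vstar ω = k} ∩ {ω | V ω = 1})).toReal = (μ {ω | Vstar ω = k}).toReal := by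
    intro k
    rw [← ENNReal.toReal_add (by finiteness) (by finiteness), ← measure_union ?_ ((hSs k).inter (hSv 1)), ← hunion k]
    rw [Set.disjoint_left]
    rintro ω ⟨-, h0⟩ ⟨-, h1⟩
    simp only [Set.mem_setOf_eq] at h0 h1
    rw [h0] at h1
    exact absurd h1 (by decide)
  have hq : ∀ k j : Fin 2, q k j
      = (μ ({ω | Vstar ω = k} ∩ {ω | V ω = j})).toReal / (μ {ω | Vstar ω = k}).toReal := by
    intro k j
    show (μ ({ω | V ω = j} ∩ {ω | Vstar ω = k})).toReal / _ = _
    rw [Set.inter_comm]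
  -- Part 1: naive means as mixtures
  have part1 : ∀ k : Fin 2,
      (∫ ω in {ω | Vstar ω = k}, (Y ω : ℝ) ∂μ) / (μ {ω | Vstar ω = k}).toReal
        = q k 0 * Real.exp α₀ + q k 1 * Real.exp (α₀ + α₁) := by
    intro k
    rw [hsplit k, hkey 0 k, hkey 1 k, hq k 0, hq k 1]
    have h0 : ((((0:Fin 2) : ℕ)) : ℝ) = 0 := by norm_num
    have h1 : ((((1:Fin 2) : ℕ)) : ℝ) = 1 := by norm_num
    rw [h0, h1, mul_zero, add_zero, mul_one]
    field_simp
  refine ⟨part1, ?_⟩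
  intro hα hqlt
  -- bounds on q
  have hq_nonneg : ∀ k j : Fin 2, 0 ≤ q k j := by
    intro k j
    rw [hq k j]
    exact div_nonneg ENNReal.toReal_nonneg ENNReal.toReal_nonneg
  have hrow : ∀ k : Fin 2, q k 0 + q k 1 = 1 := by
    intro k
    rw [hq k 0, hq k 1, ← add_div, hmsum k, div_self (hpSne k)]
  have hq11_le : q 1 1 ≤ 1 := by
    have := hrow 1
    have := hq_nonneg 1 0
    linarith
  have hAB : Real.exp α₀ < Real.exp (α₀ + α₁) :=
    Real.exp_lt_exp.mpr (by linarith)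
  obtain ⟨h1, h2, h3⟩ := arith_attenuation (Real.exp α₀) (Real.exp (α₀ + α₁))
    (q 0 1) (q 1 1) (Real.exp_pos α₀) hAB (hq_nonneg 0 1) hq11_le hqlt
  have hΔ : Δ = Real.log ((1 - q 1 1) * Real.exp α₀ + q 1 1 * Real.exp (α₀ + α₁))
      - Real.log ((1 - q 0 1) * Real.exp α₀ + q 0 1 * Real.exp (α₀ + α₁)) := by
    show Real.log _ - Real.log _ = _
    rw [part1 0, part1 1]
    have e0 : q 0 0 = 1 - q 0 1 := by linarith [hrow 0]
    have e1 : q 1 0 = 1 - q 1 1 := by linarith [hrow 1]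
    rw [e0, e1]
  have hα₁ : Real.log (Real.exp (α₀ + α₁)) - Real.log (Real.exp α₀) = α₁ := by
    rw [Real.log_exp, Real.log_exp]; ring
  rw [hα₁] at h2 h3
  refine ⟨⟨by rw [hΔ]; exact h1, by rw [hΔ]; exact h2⟩, ?_⟩
  intro hne
  rw [hΔ]
  apply h3
  rintro ⟨hq010, hq111⟩
  apply hne
  refine ⟨?_, hq111⟩
  have := hrow 0
  linarith
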